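/- Let G = SL_n(F_q) with q > 2, S a generating set with I_n ∈ S = S⁻¹, V the set of linearly independent k-tuples of vectors of F_qⁿ (0 < k < n) with the diagonal action, and 𝔛_S the Schreier configuration of Sch(V,S). If p is the smallest prime dividing q − 1, then WL(𝔛_S) ≥ log₂(diam Sch(V,S)) − log₂(p − 1) − 3. -/

import Mathlib

universe u v

/-- The type of colours after `k` Weisfeiler-Leman iterations. -/
def WLColor (C : Type v) : ℕ → Type v
  | 0 => C
  | k + 1 => WLColor C k × (WLColor C k → WLColor C k → ℕ)

/-- The Weisfeiler-Leman iterated colouring. -/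
noncomputable def WLiter {Γ : Type u} {C : Type v} (c : Γ → Γ → C) :
    (k : ℕ) → Γ → Γ → WLColor C k
  | 0 => c
  | k + 1 => fun v₁ v₂ =>
      (WLiter c k v₁ v₂,
        fun c₁ c₂ => Nat.card {w : Γ // WLiter c k v₁ w = c₁ ∧ WLiter c k w v₂ = c₂})

/-- The number of nontrivial Weisfeiler-Leman iterations: the first `k` at which
the step `k → k+1` does not refine the partition of `Γ × Γ`. -/
noncomputable def WLnum {Γ : Type u} {C : Type v} (c : Γ → Γ → C) : ℕ :=
  sInf {k | ∀ v₁ v₂ u₁ u₂ : Γ,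
    WLiter c (k + 1) v₁ v₂ = WLiter c (k + 1) u₁ u₂ ↔
      WLiter c k v₁ v₂ = WLiter c k u₁ u₂}

/-- A colour is nonempty if each vertex has at most one outgoing edge of that colour. -/
def NonemptyColor {Γ : Type u} {C : Type v} (c : Γ → Γ → C) (c₀ : C) : Prop :=
  ∀ v w w' : Γ, c v w = c₀ → c v w' = c₀ → w = w'

/-- Existence of a directed walk of length `n`. -/
def dWalk {Γ : Type u} (R : Γ → Γ → Prop) : ℕ → Γ → Γ → Prop
  | 0, v, w => v = w
  | n + 1, v, w => ∃ u, R v u ∧ dWalk R n u w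

/-- Directed graph distance. -/
noncomputable def ddist {Γ : Type u} (R : Γ → Γ → Prop) (v w : Γ) : ℕ :=
  sInf {n | dWalk R n v w}

/-- Diameter of a directed graph. -/
noncomputable def ddiam {Γ : Type u} (R : Γ → Γ → Prop) : ℕ :=
  sSup (Set.range fun p : Γ × Γ => ddist R p.1 p.2)

/-- `ColorWalk c x y cs ws` means `ws` is the list of intermediate vertices of a walk from
`x` to `y` whose consecutive edges have the colours listed in `cs`. -/
def ColorWalk {Γ : Type u} {C : Type v} (c : Γ → Γ → C) :
    Γ → Γ → List C → List Γ → Prop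
  | x, y, [d], [] => c x y = d
  | x, y, d :: ds, u :: us => c x u = d ∧ ColorWalk c u y ds us
  | _, _, _, _ => False

/-- Linearly independent `k`-tuples of vectors of `F^n`. -/
def IndepTuples (F : Type*) [Field F] (n k : ℕ) : Type _ :=
  {v : Fin k → Fin n → F // LinearIndependent F v}

section Walks

variable {Γ : Type u} {R : Γ → Γ → Prop}

theorem myDWalk_append {a b : ℕ} {x y z : Γ} (h1 : dWalk R a x y) (h2 : dWalk R b y z) :
    dWalk R (a + b) x z := by
  induction a generalizing x with
  | zero => cases h1; simpa using h2
  | succ a ih =>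
    obtain ⟨u, hxu, hw⟩ := h1
    have harith : a + 1 + b = (a + b) + 1 := by omega
    rw [harith]
    exact ⟨u, hxu, ih hw⟩

theorem myDWalk_snoc {a : ℕ} {x y z : Γ} (h1 : dWalk R a x y) (h2 : R y z) :
    dWalk R (a + 1) x z :=
  myDWalk_append h1 ⟨z, h2, rfl⟩

theorem myDWalk_reverse (hsymm : ∀ x y, R x y → R y x) {a : ℕ} {x y : Γ}
    (h : dWalk R a x y) : dWalk R a y x := by
  induction a generalizing x with
  | zero => exact h.symm
  | succ a ih =>
    obtain ⟨u, hxu, hw⟩ := h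
    exact myDWalk_snoc (ih hw) (hsymm _ _ hxu)

theorem myDWalk_map {e : Γ → Γ} (he : ∀ x y, R x y → R (e x) (e y)) {a : ℕ} {x y : Γ}
    (h : dWalk R a x y) : dWalk R a (e x) (e y) := by
  induction a generalizing x with
  | zero => cases h; rfl
  | succ a ih =>
    obtain ⟨u, hxu, hw⟩ := h
    exact ⟨e u, he _ _ hxu, ih hw⟩

theorem myDdist_spec (hconn : ∀ x y : Γ, ∃ a, dWalk R a x y) (x y : Γ) : dWalk R (ddist R x y) x y :=
  Nat.sInf_mem (hconn x y)

theorem myDdist_le {a : ℕ} {x y : Γ} (h : dWalk R a x y) : ddist R x y ≤ a :=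
  Nat.sInf_le h

theorem myDdist_self (x : Γ) : ddist R x x = 0 :=
  Nat.le_zero.mp (myDdist_le (by rfl : dWalk R 0 x x))

theorem myDdist_triangle (hconn : ∀ x y : Γ, ∃ a, dWalk R a x y) (x y z : Γ) : ddist R x z ≤ ddist R x y + ddist R y z :=
  myDdist_le (myDWalk_append (myDdist_spec hconn x y) (myDdist_spec hconn y z))

theorem myDdist_le_one {x y : Γ} (h : R x y) : ddist R x y ≤ 1 :=
  myDdist_le ⟨y, h, rfl⟩

theorem myDdist_symm (hconn : ∀ x y : Γ, ∃ a, dWalk R a x y) (hsymm : ∀ x y, R x y → R y x) (x y : Γ) :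
    ddist R x y = ddist R y x :=
  le_antisymm (myDdist_le (myDWalk_reverse hsymm (myDdist_spec hconn y x)))
    (myDdist_le (myDWalk_reverse hsymm (myDdist_spec hconn x y)))

theorem myDdist_equiv (hconn : ∀ x y : Γ, ∃ a, dWalk R a x y) (e : Equiv.Perm Γ) (he : ∀ x y, R x y ↔ R (e x) (e y)) (x y : Γ) :
    ddist R (e x) (e y) = ddist R x y := by
  refine le_antisymm (myDdist_le (myDWalk_map (fun x y h => (he x y).mp h) (myDdist_spec hconn x y))) ?_
  have := myDWalk_map (R := R) (e := e.symm)
    (fun x y h => by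
      have := (he (e.symm x) (e.symm y)).mpr (by simpa using h)
      exact this) (myDdist_spec hconn (e x) (e y))
  simpa using myDdist_le this

end Walks
section CW

variable {Γ : Type u} {C : Type v} {c : Γ → Γ → C}

theorem myCW_nil {x y : Γ} {ws : List Γ} (h : ColorWalk c x y [] ws) : False := by
  cases ws <;> exact h

theorem myCW_single {x y : Γ} {d : C} : ColorWalk c x y [d] [] ↔ c x y = d := Iff.rfl

theorem myCW_cons {x y u : Γ} {d : C} {ds : List C} {us : List Γ} :
    ColorWalk c x y (d :: ds) (u :: us) ↔ c x u = d ∧ ColorWalk c u y ds us := by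
  cases ds <;> exact Iff.rfl

theorem myCW_cons_nil {x y : Γ} {d e : C} {t : List C} (h : ColorWalk c x y (d :: e :: t) []) :
    False := h

/-- splitting a colour walk -/
theorem myCW_split : ∀ (cs₁ : List C), cs₁ ≠ [] → ∀ (cs₂ : List C), cs₂ ≠ [] →
    ∀ (x y : Γ) (ws : List Γ), ColorWalk c x y (cs₁ ++ cs₂) ws →
    ∃ mid ws₁ ws₂, ColorWalk c x mid cs₁ ws₁ ∧ ColorWalk c mid y cs₂ ws₂ := by
  intro cs₁
  induction cs₁ with
  | nil => intro h; exact absurd rfl h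
  | cons d ds ih =>
    intro _ cs₂ h₂ x y ws hw
    rcases ws with _ | ⟨u, us⟩
    · rcases ds with _ | ⟨e, t⟩
      · rcases cs₂ with _ | ⟨e₂, t₂⟩
        · exact absurd rfl h₂
        · exact absurd (by simpa using hw) (fun h => myCW_cons_nil h)
      · exact absurd (by simpa using hw) (fun h => myCW_cons_nil h)
    · rw [List.cons_append, myCW_cons] at hw
      obtain ⟨hcd, hw'⟩ := hw
      rcases ds with _ | ⟨e, t⟩
      · exact ⟨u, [], us, myCW_single.mpr hcd, by simpa using hw'⟩
      · obtain ⟨mid, ws₁, ws₂, h1, h2⟩ := ih (by simp) cs₂ h₂ u y us hw'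
        exact ⟨mid, u :: ws₁, ws₂, myCW_cons.mpr ⟨hcd, h1⟩, h2⟩

/-- concatenating colour walks -/
theorem myCW_concat : ∀ (cs₁ : List C) (x mid y : Γ) (ws₁ : List Γ) (cs₂ : List C) (ws₂ : List Γ),
    cs₂ ≠ [] → ColorWalk c x mid cs₁ ws₁ → ColorWalk c mid y cs₂ ws₂ →
    ColorWalk c x y (cs₁ ++ cs₂) (ws₁ ++ mid :: ws₂) := by
  intro cs₁
  induction cs₁ with
  | nil => intro x mid y ws₁ cs₂ ws₂ _ h1 _; exact absurd h1 (fun h => myCW_nil h)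
  | cons d ds ih =>
    intro x mid y ws₁ cs₂ ws₂ hne2 h1 h2
    rcases ws₁ with _ | ⟨u, us⟩
    · rcases ds with _ | ⟨e, t⟩
      · have : c x mid = d := h1
        exact myCW_cons.mpr ⟨this, h2⟩
      · exact absurd h1 (fun h => myCW_cons_nil h)
    · rw [myCW_cons] at h1
      exact myCW_cons.mpr ⟨h1.1, ih u mid y us cs₂ ws₂ hne2 h1.2 h2⟩

/-- a colour walk from a graph walk, with colours of actual edges -/
theorem myCW_of_walk {R : Γ → Γ → Prop} (Good : C → Prop)
    (hGood : ∀ x y, R x y → Good (c x y)) :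
    ∀ (L : ℕ) (x y : Γ), dWalk R (L + 1) x y →
    ∃ cs ws, ColorWalk c x y cs ws ∧ cs.length = L + 1 ∧ ∀ d ∈ cs, Good d := by
  intro L
  induction L with
  | zero =>
    intro x y hw
    obtain ⟨u, hxu, hw⟩ := hw
    cases hw
    exact ⟨[c x y], [], rfl, rfl, by simpa using hGood _ _ hxu⟩
  | succ L ih =>
    intro x y hw
    obtain ⟨u, hxu, hw⟩ := hw
    obtain ⟨cs, ws, h1, h2, h3⟩ := ih u y hw
    refine ⟨c x u :: cs, u :: ws, ?_, by simp [h2], ?_⟩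
    · exact myCW_cons.mpr ⟨rfl, h1⟩
    · intro d hd
      rcases List.mem_cons.mp hd with h | h
      · subst h; exact hGood _ _ hxu
      · exact h3 d h

/-- uniqueness of endpoints of colour walks with functional colours -/
theorem myCW_unique (Good : C → Prop)
    (hfun : ∀ (d : C), Good d → ∀ x u u' : Γ, c x u = d → c x u' = d → u = u') :
    ∀ (cs : List C), (∀ d ∈ cs, Good d) → ∀ (x y y' : Γ) (ws ws' : List Γ),
      ColorWalk c x y cs ws → ColorWalk c x y' cs ws' → y = y' := by
  intro cs
  induction cs with
  | nil => intro _ x y y' ws ws' h; exact absurd h (fun h => myCW_nil h)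
  | cons d ds ih =>
    intro hg x y y' ws ws' h h'
    rcases ds with _ | ⟨e, t⟩
    · rcases ws with _ | ⟨u, us⟩
      · rcases ws' with _ | ⟨u', us'⟩
        · exact hfun d (hg d (by simp)) x y y' h h'
        · rw [myCW_cons] at h'; exact absurd h'.2 (fun h => myCW_nil h)
      · rw [myCW_cons] at h; exact absurd h.2 (fun h => myCW_nil h)
    · rcases ws with _ | ⟨u, us⟩
      · exact absurd h (fun h => myCW_cons_nil h)
      · rcases ws' with _ | ⟨u', us'⟩
        · exact absurd h' (fun h => myCW_cons_nil h)
        · rw [myCW_cons] at h h'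
          have : u = u' := hfun d (hg d (by simp)) x u u' h.1 h'.1
          subst this
          exact ih (fun d hd => hg d (by simp [hd])) u y y' us us' h.2 h'.2

end CW
section WL

variable {Γ : Type u} {C : Type v} (c : Γ → Γ → C)

theorem myWL_succ (k : ℕ) (x y : Γ) :
    WLiter c (k + 1) x y = (WLiter c k x y,
      fun c₁ c₂ => Nat.card {w : Γ // WLiter c k x w = c₁ ∧ WLiter c k w y = c₂}) := rfl

theorem myWL_mono {k : ℕ} {x y x' y' : Γ}
    (h : WLiter c (k + 1) x y = WLiter c (k + 1) x' y') : WLiter c k x y = WLiter c k x' y' :=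
  congrArg Prod.fst h

theorem myWL_counts {k : ℕ} {x y x' y' : Γ}
    (h : WLiter c (k + 1) x y = WLiter c (k + 1) x' y') (c₁ c₂ : WLColor C k) :
    Nat.card {w : Γ // WLiter c k x w = c₁ ∧ WLiter c k w y = c₂} =
      Nat.card {w : Γ // WLiter c k x' w = c₁ ∧ WLiter c k w y' = c₂} :=
  congrFun (congrFun (congrArg Prod.snd h) c₁) c₂

/-- WL colours are invariant under automorphisms of the configuration. -/
theorem myWL_equiv (e : Equiv.Perm Γ) (he : ∀ x y, c (e x) (e y) = c x y) :
    ∀ (k : ℕ) (x y : Γ), WLiter c k (e x) (e y) = WLiter c k x y := by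
  intro k
  induction k with
  | zero => exact fun x y => he x y
  | succ k ih =>
    intro x y
    rw [myWL_succ, myWL_succ]
    refine Prod.ext (ih x y) ?_
    funext c₁ c₂
    exact (Nat.card_congr (Equiv.subtypeEquiv e (fun w => by rw [ih x w, ih w y]))).symm

/-- The stabilisation property at step `k`. -/
def myStab (k : ℕ) : Prop :=
  ∀ v₁ v₂ u₁ u₂ : Γ,
    WLiter c (k + 1) v₁ v₂ = WLiter c (k + 1) u₁ u₂ ↔ WLiter c k v₁ v₂ = WLiter c k u₁ u₂

theorem myStab_succ [Finite Γ] {k : ℕ} (H : myStab c k) : myStab c (k + 1) := by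
  intro v₁ v₂ u₁ u₂
  constructor
  · exact fun h => myWL_mono c h
  · intro h1
    rw [myWL_succ, myWL_succ]
    refine Prod.ext h1 ?_
    funext c₁ c₂
    by_cases hne : ∃ w : Γ, WLiter c (k + 1) v₁ w = c₁ ∧ WLiter c (k + 1) w v₂ = c₂
    · obtain ⟨w₀, ha, hb⟩ := hne
      set a := WLiter c k v₁ w₀ with hadef
      set b := WLiter c k w₀ v₂ with hbdef
      -- the level-(k+1) sets coincide with level-k sets
      have hsetv : ∀ w : Γ, (WLiter c (k + 1) v₁ w = c₁ ∧ WLiter c (k + 1) w v₂ = c₂) ↔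
          (WLiter c k v₁ w = a ∧ WLiter c k w v₂ = b) := by
        intro w
        constructor
        · rintro ⟨h1', h2'⟩
          exact ⟨myWL_mono c (h1'.trans ha.symm), myWL_mono c (h2'.trans hb.symm)⟩
        · rintro ⟨h1', h2'⟩
          exact ⟨((H _ _ _ _).mpr h1').trans ha, ((H _ _ _ _).mpr h2').trans hb⟩
      -- find a witness on the `u` side
      have hcard := myWL_counts c h1 a b
      have hpos : 0 < Nat.card {w : Γ // WLiter c k v₁ w = a ∧ WLiter c k w v₂ = b} := by
        rw [Nat.card_pos_iff]
        exact ⟨⟨⟨w₀, rfl, rfl⟩⟩, inferInstance⟩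
      rw [hcard] at hpos
      have : Nonempty {w : Γ // WLiter c k u₁ w = a ∧ WLiter c k w u₂ = b} :=
        (Nat.card_pos_iff.mp hpos).1
      obtain ⟨⟨w₁, hw1a, hw1b⟩⟩ := this
      have hsetu : ∀ w : Γ, (WLiter c (k + 1) u₁ w = c₁ ∧ WLiter c (k + 1) w u₂ = c₂) ↔
          (WLiter c k u₁ w = a ∧ WLiter c k w u₂ = b) := by
        intro w
        have hw1c₁ : WLiter c (k + 1) u₁ w₁ = c₁ :=
          ((H _ _ _ _).mpr (hw1a.trans hadef)).trans ha
        have hw1c₂ : WLiter c (k + 1) w₁ u₂ = c₂ :=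
          ((H _ _ _ _).mpr (hw1b.trans hbdef)).trans hb
        constructor
        · rintro ⟨h1', h2'⟩
          exact ⟨myWL_mono c (h1'.trans hw1c₁.symm) |>.trans hw1a,
                 myWL_mono c (h2'.trans hw1c₂.symm) |>.trans hw1b⟩
        · rintro ⟨h1', h2'⟩
          exact ⟨((H _ _ _ _).mpr (h1'.trans hw1a.symm)).trans hw1c₁,
                 ((H _ _ _ _).mpr (h2'.trans hw1b.symm)).trans hw1c₂⟩
      calc Nat.card {w : Γ // WLiter c (k+1) v₁ w = c₁ ∧ WLiter c (k+1) w v₂ = c₂}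
          = Nat.card {w : Γ // WLiter c k v₁ w = a ∧ WLiter c k w v₂ = b} :=
            Nat.card_congr (Equiv.subtypeEquiv (Equiv.refl Γ) (fun w => by simpa using hsetv w))
        _ = Nat.card {w : Γ // WLiter c k u₁ w = a ∧ WLiter c k w u₂ = b} := hcard
        _ = Nat.card {w : Γ // WLiter c (k+1) u₁ w = c₁ ∧ WLiter c (k+1) w u₂ = c₂} :=
            (Nat.card_congr (Equiv.subtypeEquiv (Equiv.refl Γ) (fun w => by simpa using hsetu w))).symm
    · -- both sides empty
      show Nat.card {w : Γ // WLiter c (k+1) v₁ w = c₁ ∧ WLiter c (k+1) w v₂ = c₂} =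
        Nat.card {w : Γ // WLiter c (k+1) u₁ w = c₁ ∧ WLiter c (k+1) w u₂ = c₂}
      have hv0 : Nat.card {w : Γ // WLiter c (k+1) v₁ w = c₁ ∧ WLiter c (k+1) w v₂ = c₂} = 0 := by
        have : IsEmpty {w : Γ // WLiter c (k+1) v₁ w = c₁ ∧ WLiter c (k+1) w v₂ = c₂} := by
          refine ⟨fun w => hne ⟨w.1, w.2⟩⟩
        exact Nat.card_of_isEmpty
      rw [hv0]
      by_contra hu0
      have : ∃ w : Γ, WLiter c (k + 1) u₁ w = c₁ ∧ WLiter c (k + 1) w u₂ = c₂ := by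
        by_contra hemp
        push_neg at hemp
        have : IsEmpty {w : Γ // WLiter c (k+1) u₁ w = c₁ ∧ WLiter c (k+1) w u₂ = c₂} :=
          ⟨fun w => (hemp w.1 w.2.1) w.2.2⟩
        exact hu0 Nat.card_of_isEmpty.symm
      obtain ⟨w₁, hw1a, hw1b⟩ := this
      set a := WLiter c k u₁ w₁
      set b := WLiter c k w₁ u₂
      have hcard := myWL_counts c h1 a b
      have hpos : 0 < Nat.card {w : Γ // WLiter c k u₁ w = a ∧ WLiter c k w u₂ = b} := by
        rw [Nat.card_pos_iff]
        exact ⟨⟨⟨w₁, rfl, rfl⟩⟩, inferInstance⟩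
      rw [← hcard] at hpos
      obtain ⟨⟨w₀, hw0a, hw0b⟩⟩ := (Nat.card_pos_iff.mp hpos).1
      refine hne ⟨w₀, ?_, ?_⟩
      · exact ((H _ _ _ _).mpr (hw0a.trans rfl)).trans hw1a
      · exact ((H _ _ _ _).mpr (hw0b.trans rfl)).trans hw1b

theorem myStab_add [Finite Γ] {k : ℕ} (H : myStab c k) : ∀ j, myStab c (k + j) := by
  intro j
  induction j with
  | zero => exact H
  | succ j ih => exact myStab_succ c ih

/-- colour equality propagates from the stabilisation point upwards -/
theorem myStab_eq_above [Finite Γ] {m : ℕ} (H : myStab c m) :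
    ∀ (j : ℕ) (v₁ v₂ u₁ u₂ : Γ), WLiter c m v₁ v₂ = WLiter c m u₁ u₂ →
      WLiter c (m + j) v₁ v₂ = WLiter c (m + j) u₁ u₂ := by
  intro j
  induction j with
  | zero => exact fun _ _ _ _ h => h
  | succ j ih =>
    intro v₁ v₂ u₁ u₂ h
    have := ih _ _ _ _ h
    have harith : m + (j + 1) = (m + j) + 1 := rfl
    rw [harith]
    exact (myStab_add c H j _ _ _ _).mpr this

/-- the set used in `WLnum` is nonempty -/
theorem myStabSet_nonempty [Finite Γ] : ∃ k, myStab c k := by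
  by_contra hno
  push_neg at hno
  -- the sets E k strictly decrease
  set E : ℕ → Set ((Γ × Γ) × (Γ × Γ)) := fun k =>
    {PQ | WLiter c k PQ.1.1 PQ.1.2 = WLiter c k PQ.2.1 PQ.2.2} with hE
  have hmono : ∀ k, E (k + 1) ⊆ E k := fun k PQ h => myWL_mono c h
  have hstrict : ∀ k, E (k + 1) ⊂ E k := by
    intro k
    refine ⟨hmono k, ?_⟩
    intro hsub
    refine hno k (fun v₁ v₂ u₁ u₂ => ⟨fun h => myWL_mono c h, fun h => ?_⟩)
    exact hsub (show ((v₁,v₂),(u₁,u₂)) ∈ E k from h)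
  have hcard : ∀ k, (E (k + 1)).ncard < (E k).ncard := by
    intro k
    exact Set.ncard_lt_ncard (hstrict k) (Set.toFinite _)
  have hdesc : ∀ k, (E k).ncard + k ≤ (E 0).ncard := by
    intro k
    induction k with
    | zero => simp
    | succ k ih => have := hcard k; omega
  have := hdesc ((E 0).ncard + 1)
  omega

theorem myWLnum_mem [Finite Γ] : myStab c (WLnum c) := by
  have h := myStabSet_nonempty c
  exact Nat.sInf_mem h

end WL
section Transfer

variable {Γ : Type u} {C : Type v} (c : Γ → Γ → C)

/-- Walk transfer: pairs with equal `WLiter` colour at iteration `h` admit colour walks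
with the same colour lists, for lists of length at most `2^h`. -/
theorem myWL_transfer [Finite Γ] :
    ∀ (h : ℕ) (x y x' y' : Γ), WLiter c h x y = WLiter c h x' y' →
    ∀ (cs : List C) (ws : List Γ), ColorWalk c x y cs ws → cs.length ≤ 2 ^ h →
    ∃ ws', ColorWalk c x' y' cs ws' := by
  intro h
  induction h with
  | zero =>
    intro x y x' y' heq cs ws hw hlen
    rcases cs with _ | ⟨d, ds⟩
    · exact absurd hw (fun h => myCW_nil h)
    · rcases ds with _ | ⟨e, t⟩
      · rcases ws with _ | ⟨u, us⟩
        · have : c x y = d := hw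
          exact ⟨[], myCW_single.mpr (by rw [show c x' y' = c x y from heq.symm, this])⟩
        · rw [myCW_cons] at hw
          exact absurd hw.2 (fun h => myCW_nil h)
      · simp at hlen
  | succ h ih =>
    intro x y x' y' heq cs ws hw hlen
    rcases le_or_gt cs.length (2 ^ h) with hsmall | hbig
    · exact ih x y x' y' (myWL_mono c heq) cs ws hw hsmall
    · -- split the walk in half
      have h1pos : 0 < 2 ^ h := Nat.pow_pos (by norm_num)
      set cs₁ := cs.take (2 ^ h) with hcs₁
      set cs₂ := cs.drop (2 ^ h) with hcs₂
      have hne₁ : cs₁ ≠ [] := by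
        have : cs₁.length = 2 ^ h := by
          rw [hcs₁, List.length_take]
          omega
        intro hnil; rw [hnil] at this; simp at this; omega
      have hne₂ : cs₂ ≠ [] := by
        have : cs₂.length = cs.length - 2 ^ h := by rw [hcs₂, List.length_drop]
        intro hnil; rw [hnil] at this; simp at this; omega
      have hsplit := myCW_split cs₁ hne₁ cs₂ hne₂ x y ws (by rw [hcs₁, hcs₂, List.take_append_drop]; exact hw)
      obtain ⟨mid, ws₁, ws₂, hw1, hw2⟩ := hsplit
      have hcount := myWL_counts c heq (WLiter c h x mid) (WLiter c h mid y)
      have hpos : 0 < Nat.card {w : Γ // WLiter c h x w = WLiter c h x mid ∧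
          WLiter c h w y = WLiter c h mid y} := by
        rw [Nat.card_pos_iff]
        exact ⟨⟨⟨mid, rfl, rfl⟩⟩, inferInstance⟩
      rw [hcount] at hpos
      obtain ⟨⟨mid', hm1, hm2⟩⟩ := (Nat.card_pos_iff.mp hpos).1
      have hlen₁ : cs₁.length ≤ 2 ^ h := by
        rw [hcs₁, List.length_take]; omega
      have hlen₂ : cs₂.length ≤ 2 ^ h := by
        have : cs.length ≤ 2 ^ (h + 1) := hlen
        rw [hcs₂, List.length_drop]
        have : 2 ^ (h + 1) = 2 ^ h + 2 ^ h := by ring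
        omega
      obtain ⟨ws₁', hw1'⟩ := ih x mid x' mid' hm1.symm cs₁ ws₁ hw1 hlen₁
      obtain ⟨ws₂', hw2'⟩ := ih mid y mid' y' hm2.symm cs₂ ws₂ hw2 hlen₂
      exact ⟨ws₁' ++ mid' :: ws₂', by
        rw [hcs₁, hcs₂] at *
        have := myCW_concat cs₁ x' mid' y' ws₁' cs₂ ws₂' hne₂ hw1' hw2'
        rw [← List.take_append_drop (2 ^ h) cs]
        exact this⟩

end Transfer
section LemmaM

variable {Γ : Type u} {C : Type v} (c : Γ → Γ → C) (R : Γ → Γ → Prop) (σ : Equiv.Perm Γ) (P : ℕ)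

theorem mySigma_pow_c (hσc : ∀ x y, c (σ x) (σ y) = c x y) :
    ∀ (t : ℕ) (x y : Γ), c ((σ ^ t) x) ((σ ^ t) y) = c x y := by
  intro t
  induction t with
  | zero => intro x y; simp
  | succ t ih =>
    intro x y
    rw [pow_succ', Equiv.Perm.mul_apply, Equiv.Perm.mul_apply]
    rw [hσc ((σ ^ t) x) ((σ ^ t) y), ih]

theorem mySigma_pow_R (hRσ : ∀ x y, R x y ↔ R (σ x) (σ y)) :
    ∀ (t : ℕ) (x y : Γ), R ((σ ^ t) x) ((σ ^ t) y) ↔ R x y := by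
  intro t
  induction t with
  | zero => intro x y; simp
  | succ t ih =>
    intro x y
    rw [pow_succ', Equiv.Perm.mul_apply, Equiv.Perm.mul_apply]
    rw [← hRσ ((σ ^ t) x) ((σ ^ t) y)]
    exact ih x y

theorem mySigma_pow_mod (hP : 0 < P) (hσP : σ ^ P = 1) (t : ℕ) : σ ^ t = σ ^ (t % P) := by
  conv_lhs => rw [← Nat.div_add_mod t P]
  rw [pow_add, pow_mul, hσP, one_pow, one_mul]

theorem mySigma_pow_dist (hconn : ∀ x y : Γ, ∃ a, dWalk R a x y) (hRσ : ∀ x y, R x y ↔ R (σ x) (σ y)) (t : ℕ) (x y : Γ) :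
    ddist R ((σ ^ t) x) ((σ ^ t) y) = ddist R x y :=
  myDdist_equiv hconn (σ ^ t) (fun x y => (mySigma_pow_R R σ hRσ t x y).symm) x y

theorem mySigma_cancel (hP : 0 < P) (hσP : σ ^ P = 1) (a : ℕ) (w : Γ) :
    (σ ^ (P - a % P)) ((σ ^ a) w) = w := by
  rw [← Equiv.Perm.mul_apply, ← pow_add]
  have h1 : (P - a % P + a) % P = 0 := by
    have := Nat.div_add_mod a P
    have h2 : P - a % P + a = P * (1 + a / P) := by
      have := Nat.mod_lt a hP
      ring_nf
      omega
    rw [h2]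
    simp [Nat.mul_mod_right]
  rw [mySigma_pow_mod σ P hP hσP, h1]
  simp

theorem mySigma_cancel' (hP : 0 < P) (hσP : σ ^ P = 1) (a : ℕ) (w : Γ) :
    (σ ^ a) ((σ ^ (P - a % P)) w) = w := by
  rw [← Equiv.Perm.mul_apply, ← pow_add]
  have h1 : (a + (P - a % P)) % P = 0 := by
    have := Nat.div_add_mod a P
    have := Nat.mod_lt a hP
    have h2 : a + (P - a % P) = P * (1 + a / P) := by ring_nf; omega
    rw [h2]
    simp [Nat.mul_mod_right]
  rw [mySigma_pow_mod σ P hP hσP, h1]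
  simp

/-- Lemma M: pairs whose `σ`-orbits are far apart cannot be distinguished from their
`σ`-shifts in few iterations. -/
theorem myLemmaM [Finite Γ]
    (hconn : ∀ x y : Γ, ∃ a, dWalk R a x y)
    (hP : 0 < P) (hσP : σ ^ P = 1)
    (hσc : ∀ x y, c (σ x) (σ y) = c x y)
    (hRσ : ∀ x y, R x y ↔ R (σ x) (σ y))
    (hbase : ∀ x y x' y' : Γ, ¬ R x y → ¬ R x' y' → c x y = c x' y') :
    ∀ (h : ℕ) (x y : Γ), (∀ b, b < P → 2 ^ h < ddist R x ((σ ^ b) y)) →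
    ∀ a : ℕ, WLiter c h x y = WLiter c h x ((σ ^ a) y) := by
  intro h
  induction h with
  | zero =>
    intro x y hcond a
    have hxy : ¬ R x y := by
      intro hr
      have := myDdist_le_one (R := R) hr
      have h0 := hcond 0 hP
      simp at h0
      omega
    have hxay : ¬ R x ((σ ^ a) y) := by
      intro hr
      have := myDdist_le_one (R := R) hr
      have h0 := hcond (a % P) (Nat.mod_lt a hP)
      rw [← mySigma_pow_mod σ P hP hσP] at h0
      simp at h0
      omega
    exact hbase x y x ((σ ^ a) y) hxy hxay
  | succ h ih =>
    intro x y hcond a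
    have hcond' : ∀ b, b < P → 2 ^ h < ddist R x ((σ ^ b) y) := by
      intro b hb
      have := hcond b hb
      have h2 : (2:ℕ) ^ h ≤ 2 ^ (h + 1) := Nat.pow_le_pow_right (by norm_num) (by omega)
      omega
    -- the near set
    set Near : Γ → Prop := fun w => ∃ b, b < P ∧ ddist R w ((σ ^ b) y) ≤ 2 ^ h with hNear
    have hNear_shift : ∀ (t : ℕ) (w : Γ), Near w → Near ((σ ^ t) w) := by
      intro t w ⟨b, hb, hd⟩
      refine ⟨(t + b) % P, Nat.mod_lt _ hP, ?_⟩
      have : (σ ^ ((t + b) % P)) y = (σ ^ t) ((σ ^ b) y) := by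
        rw [← mySigma_pow_mod σ P hP hσP, pow_add, Equiv.Perm.mul_apply]
      rw [this, mySigma_pow_dist R σ hconn hRσ t w]
      exact hd
    classical
    -- the hybrid bijection
    set f : Γ → Γ := fun w => if Near w then (σ ^ a) w else w with hf
    set g : Γ → Γ := fun w => if Near w then (σ ^ (P - a % P)) w else w with hg
    have hgf : Function.LeftInverse g f := by
      intro w
      by_cases hw : Near w
      · have h1 : f w = (σ ^ a) w := if_pos hw
        have h2 : Near ((σ ^ a) w) := hNear_shift a w hw
        rw [h1, hg]
        simp only [if_pos h2]
        exact mySigma_cancel σ P hP hσP a w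
      · rw [hf, hg]; simp only [if_neg hw]
    have hfg : Function.RightInverse g f := by
      intro w
      by_cases hw : Near w
      · have h1 : g w = (σ ^ (P - a % P)) w := if_pos hw
        have h2 : Near ((σ ^ (P - a % P)) w) := hNear_shift _ w hw
        rw [h1, hf]
        simp only [if_pos h2]
        exact mySigma_cancel' σ P hP hσP a w
      · rw [hf, hg]; simp only [if_neg hw]
    set feq : Equiv.Perm Γ := ⟨f, g, hgf, hfg⟩ with hfeq
    -- the subtype iff
    have hiff : ∀ (c₁ c₂ : WLColor C h) (w : Γ),
        (WLiter c h x w = c₁ ∧ WLiter c h w y = c₂) ↔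
        (WLiter c h x (f w) = c₁ ∧ WLiter c h (f w) ((σ ^ a) y) = c₂) := by
      intro c₁ c₂ w
      by_cases hw : Near w
      · have h1 : f w = (σ ^ a) w := if_pos hw
        obtain ⟨b₀, hb₀, hd₀⟩ := hw
        have hcomp1 : WLiter c h x w = WLiter c h x ((σ ^ a) w) := by
          apply ih x w
          intro b hb
          have hmain := hcond ((b + b₀) % P) (Nat.mod_lt _ hP)
          have htri := myDdist_triangle hconn x ((σ ^ b) w) ((σ ^ ((b + b₀) % P)) y)
          have hdd : ddist R ((σ ^ b) w) ((σ ^ ((b + b₀) % P)) y) ≤ 2 ^ h := by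
            have heqpt : (σ ^ ((b + b₀) % P)) y = (σ ^ b) ((σ ^ b₀) y) := by
              rw [← mySigma_pow_mod σ P hP hσP, pow_add, Equiv.Perm.mul_apply]
            rw [heqpt, mySigma_pow_dist R σ hconn hRσ b w]
            exact hd₀
          have hp2 : (2:ℕ) ^ (h+1) = 2 ^ h + 2 ^ h := by ring
          omega
        have hcomp2 : WLiter c h ((σ ^ a) w) ((σ ^ a) y) = WLiter c h w y :=
          myWL_equiv c (σ ^ a) (mySigma_pow_c c σ hσc a) h w y
        rw [h1, ← hcomp1, hcomp2]
      · have h1 : f w = w := if_neg hw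
        have hcomp2 : WLiter c h w y = WLiter c h w ((σ ^ a) y) := by
          apply ih w y
          intro b hb
          by_contra hle
          exact hw ⟨b, hb, by omega⟩
        rw [h1, ← hcomp2]
    -- conclude
    rw [myWL_succ, myWL_succ]
    refine Prod.ext (ih x y hcond' a) ?_
    funext c₁ c₂
    exact Nat.card_congr (Equiv.subtypeEquiv feq (hiff c₁ c₂))

end LemmaM
section Grand

variable {Γ : Type u} {C : Type v} (c : Γ → Γ → C) (R : Γ → Γ → Prop) (σ : Equiv.Perm Γ) (P : ℕ)

/-- Key lemma: every vertex is within `2 ^ WLnum c` of the `σ`-orbit of every other vertex. -/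
theorem myKey [Finite Γ]
    (hconn : ∀ x y : Γ, ∃ a, dWalk R a x y)
    (hp : P.Prime) (hσP : σ ^ P = 1)
    (hσc : ∀ x y, c (σ x) (σ y) = c x y)
    (hRσ : ∀ x y, R x y ↔ R (σ x) (σ y))
    (hbase : ∀ x y x' y' : Γ, ¬ R x y → ¬ R x' y' → c x y = c x' y')
    (hσy : ∀ y : Γ, σ y ≠ y)
    (Good : C → Prop) (hGoodR : ∀ x y, R x y → Good (c x y))
    (hfun : ∀ (d : C), Good d → ∀ x u u' : Γ, c x u = d → c x u' = d → u = u') :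
    ∀ x y : Γ, ∃ b, b < P ∧ ddist R x ((σ ^ b) y) ≤ 2 ^ (WLnum c) := by
  intro x y
  by_contra hno
  push_neg at hno
  set m := WLnum c with hm
  have hcond : ∀ b, b < P → 2 ^ m < ddist R x ((σ ^ b) y) := fun b hb => hno b hb
  have heqm : WLiter c m x y = WLiter c m x ((σ ^ 1) y) := by
    have := myLemmaM c R σ P hconn hp.pos hσP hσc hRσ hbase m x y hcond 1
    simpa using this
  -- x is far from y
  have hd0 : 2 ^ m < ddist R x y := by
    have := hcond 0 hp.pos
    simpa using this
  have hL1 : 1 ≤ ddist R x y := by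
    have h1 : (1:ℕ) ≤ 2 ^ m := Nat.one_le_two_pow
    omega
  set L := ddist R x y with hLdef
  have hwalk : dWalk R L x y := myDdist_spec hconn x y
  obtain ⟨L', hL'⟩ : ∃ L', L = L' + 1 := ⟨L - 1, by omega⟩
  rw [hL'] at hwalk
  obtain ⟨cs, ws, hcw, hcslen, hcsGood⟩ := myCW_of_walk Good hGoodR L' x y hwalk
  -- colour equality at a high iteration
  set h := max m L with hh
  have heqh : WLiter c h x y = WLiter c h x ((σ ^ 1) y) := by
    have := myStab_eq_above c (myWLnum_mem c) (h - m) x y x ((σ ^ 1) y) heqm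
    have harith : m + (h - m) = h := by
      have : m ≤ h := le_max_left _ _
      omega
    rwa [harith] at this
  have hlen : cs.length ≤ 2 ^ h := by
    rw [hcslen, ← hL']
    calc L ≤ 2 ^ L := (Nat.lt_two_pow_self).le
    _ ≤ 2 ^ h := Nat.pow_le_pow_right (by norm_num) (le_max_right _ _)
  obtain ⟨ws', hcw'⟩ := myWL_transfer c h x y x ((σ ^ 1) y) heqh cs ws hcw hlen
  have hyy : y = (σ ^ 1) y := myCW_unique Good hfun cs hcsGood x y ((σ ^ 1) y) ws ws' hcw hcw'
  exact hσy y (by simpa using hyy.symm)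

/-- subadditivity of the orbit distances -/
theorem mySubadd
    (hconn : ∀ x y : Γ, ∃ a, dWalk R a x y)
    (hRσ : ∀ x y, R x y ↔ R (σ x) (σ y)) (y : Γ) (cc : ℕ) :
    ∀ j : ℕ, ddist R y ((σ ^ (j * cc)) y) ≤ j * ddist R y ((σ ^ cc) y) := by
  intro j
  induction j with
  | zero => simp [myDdist_self (R := R)]
  | succ j ih =>
    have htri := myDdist_triangle hconn y ((σ ^ (j * cc)) y) ((σ ^ ((j+1) * cc)) y)
    have hstep : ddist R ((σ ^ (j * cc)) y) ((σ ^ ((j+1) * cc)) y) = ddist R y ((σ ^ cc) y) := by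
      have hpt : (σ ^ ((j+1) * cc)) y = (σ ^ (j * cc)) ((σ ^ cc) y) := by
        rw [← Equiv.Perm.mul_apply, ← pow_add]
        congr 1
        ring
      rw [hpt, mySigma_pow_dist R σ hconn hRσ (j * cc) y ((σ ^ cc) y)]
    calc ddist R y ((σ ^ ((j+1) * cc)) y)
        ≤ ddist R y ((σ ^ (j * cc)) y) + ddist R ((σ ^ (j * cc)) y) ((σ ^ ((j+1) * cc)) y) := htri
      _ = ddist R y ((σ ^ (j * cc)) y) + ddist R y ((σ ^ cc) y) := by rw [hstep]
      _ ≤ j * ddist R y ((σ ^ cc) y) + ddist R y ((σ ^ cc) y) := by omega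
      _ = (j + 1) * ddist R y ((σ ^ cc) y) := by ring

/-- dichotomy along a walk -/
theorem myQ [Finite Γ] {E : ℕ}
    (hconn : ∀ x y : Γ, ∃ a, dWalk R a x y)
    (hsymm : ∀ x y, R x y → R y x)
    (hP : 0 < P) (hσP : σ ^ P = 1)
    (hRσ : ∀ x y, R x y ↔ R (σ x) (σ y))
    (hKey : ∀ x y : Γ, ∃ b, b < P ∧ ddist R x ((σ ^ b) y) ≤ E) (y : Γ) :
    ∀ (L : ℕ) (x : Γ), dWalk R L x y → ∀ b, b < P → ddist R x ((σ ^ b) y) ≤ E →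
    (b = 0 ∨ ∃ cc, 0 < cc ∧ cc < P ∧ ddist R y ((σ ^ cc) y) ≤ 2 * E + 1) := by
  intro L
  induction L with
  | zero =>
    intro x hw b hb hd
    cases hw
    rcases Nat.eq_zero_or_pos b with hb0 | hbpos
    · exact Or.inl hb0
    · exact Or.inr ⟨b, hbpos, hb, le_trans hd (by omega)⟩
  | succ L ih =>
    intro x hw b hb hd
    obtain ⟨x₁, hx₁, hw'⟩ := hw
    obtain ⟨b', hb', hd'⟩ := hKey x₁ y
    rcases ih x₁ hw' b' hb' hd' with hb'0 | hright
    · rcases Nat.eq_zero_or_pos b with hb0 | hbpos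
      · exact Or.inl hb0
      · refine Or.inr ⟨P - b, by omega, by omega, ?_⟩
        -- d(y, σ^{P-b} y) = d(σ^b y, y) ≤ d(σ^b y, x) + d(x,x₁) + d(x₁,y)
        have hpt : (σ ^ b) ((σ ^ (P - b)) y) = y := by
          rw [← Equiv.Perm.mul_apply, ← pow_add]
          have : b + (P - b) = P := by omega
          rw [this, hσP]
          rfl
        have hshift : ddist R y ((σ ^ (P - b)) y) = ddist R ((σ ^ b) y) y := by
          have := mySigma_pow_dist R σ hconn hRσ b y ((σ ^ (P - b)) y)
          rw [hpt] at this
          exact this.symm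
        rw [hshift]
        have h1 : ddist R ((σ ^ b) y) x = ddist R x ((σ ^ b) y) := myDdist_symm hconn hsymm _ _
        have htri1 := myDdist_triangle hconn ((σ ^ b) y) x y
        have htri2 := myDdist_triangle hconn x x₁ y
        have hxx₁ : ddist R x x₁ ≤ 1 := myDdist_le_one hx₁
        have hx₁y : ddist R x₁ y ≤ E := by
          have := hd'
          rw [hb'0] at this
          simpa using this
        omega
    · exact Or.inr hright

/-- the per-pair distance bound -/
theorem myPairBound [Finite Γ]
    (hconn : ∀ x y : Γ, ∃ a, dWalk R a x y)
    (hsymm : ∀ x y, R x y → R y x)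
    (hp : P.Prime) (hσP : σ ^ P = 1)
    (hσc : ∀ x y, c (σ x) (σ y) = c x y)
    (hRσ : ∀ x y, R x y ↔ R (σ x) (σ y))
    (hbase : ∀ x y x' y' : Γ, ¬ R x y → ¬ R x' y' → c x y = c x' y')
    (hσy : ∀ y : Γ, σ y ≠ y)
    (Good : C → Prop) (hGoodR : ∀ x y, R x y → Good (c x y))
    (hfun : ∀ (d : C), Good d → ∀ x u u' : Γ, c x u = d → c x u' = d → u = u') :
    ∀ x y : Γ, ddist R x y ≤ 2 ^ (WLnum c) + (P - 1) * (2 * 2 ^ (WLnum c) + 1) := by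
  intro x y
  set E := 2 ^ (WLnum c) with hE
  have hKey := myKey c R σ P hconn hp hσP hσc hRσ hbase hσy Good hGoodR hfun
  obtain ⟨b, hb, hdb⟩ := hKey x y
  have hwalk : dWalk R (ddist R x y) x y := myDdist_spec hconn x y
  have hQ := myQ R σ P hconn hsymm hp.pos hσP hRσ hKey y (ddist R x y) x hwalk b hb hdb
  rcases Nat.eq_zero_or_pos b with hb0 | hbpos
  · subst hb0
    have : ddist R x y ≤ E := by simpa using hdb
    omega
  rcases hQ with hb0 | ⟨cc, hcc0, hccP, hcct⟩
  · omega
  · -- find j with σ^(j*cc) = σ^(P-b)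
    haveI : Fact P.Prime := ⟨hp⟩
    haveI : NeZero P := ⟨hp.pos.ne'⟩
    set e := P - b with he
    have hccne : (cc : ZMod P) ≠ 0 := by
      rw [Ne, ZMod.natCast_eq_zero_iff]
      intro hdvd
      have := Nat.le_of_dvd hcc0 hdvd
      omega
    set z := (e : ZMod P) * (cc : ZMod P)⁻¹ with hz
    set j := z.val with hj
    have hjP : j < P := ZMod.val_lt z
    have hcast : ((j * cc : ℕ) : ZMod P) = ((e : ℕ) : ZMod P) := by
      push_cast
      rw [hj, ZMod.natCast_val, ZMod.cast_id, hz, mul_assoc,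
        inv_mul_cancel₀ hccne, mul_one]
    have hmod : (j * cc) % P = e % P := (ZMod.natCast_eq_natCast_iff' _ _ _).mp hcast
    have hpow : (σ ^ (j * cc)) = σ ^ e := by
      rw [mySigma_pow_mod σ P hp.pos hσP (j * cc), mySigma_pow_mod σ P hp.pos hσP e, hmod]
    -- bound on t_e
    have hte : ddist R y ((σ ^ e) y) ≤ (P - 1) * (2 * E + 1) := by
      rw [← hpow]
      calc ddist R y ((σ ^ (j * cc)) y) ≤ j * ddist R y ((σ ^ cc) y) :=
            mySubadd R σ hconn hRσ y cc j
        _ ≤ (P - 1) * (2 * E + 1) := Nat.mul_le_mul (by omega) hcct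
    -- final triangle
    have hpt : (σ ^ b) ((σ ^ e) y) = y := by
      rw [← Equiv.Perm.mul_apply, ← pow_add]
      have : b + e = P := by omega
      rw [this, hσP]
      rfl
    have hshift : ddist R ((σ ^ b) y) y = ddist R y ((σ ^ e) y) := by
      have := mySigma_pow_dist R σ hconn hRσ b y ((σ ^ e) y)
      rw [hpt] at this
      exact this
    have htri := myDdist_triangle hconn x ((σ ^ b) y) y
    omega

/-- the diameter bound -/
theorem myDiamBound [Finite Γ]
    (hconn : ∀ x y : Γ, ∃ a, dWalk R a x y)
    (hsymm : ∀ x y, R x y → R y x)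
    (hp : P.Prime) (hσP : σ ^ P = 1)
    (hσc : ∀ x y, c (σ x) (σ y) = c x y)
    (hRσ : ∀ x y, R x y ↔ R (σ x) (σ y))
    (hbase : ∀ x y x' y' : Γ, ¬ R x y → ¬ R x' y' → c x y = c x' y')
    (hσy : ∀ y : Γ, σ y ≠ y)
    (Good : C → Prop) (hGoodR : ∀ x y, R x y → Good (c x y))
    (hfun : ∀ (d : C), Good d → ∀ x u u' : Γ, c x u = d → c x u' = d → u = u') :
    ddiam R ≤ (P - 1) * 2 ^ (WLnum c + 3) := by
  have hpair := myPairBound c R σ P hconn hsymm hp hσP hσc hRσ hbase hσy Good hGoodR hfun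
  refine csSup_le' ?_
  rintro _ ⟨⟨x, y⟩, rfl⟩
  refine le_trans (hpair x y) ?_
  set E := 2 ^ (WLnum c) with hE
  have hE1 : 1 ≤ E := Nat.one_le_two_pow
  have hP1 : 1 ≤ P - 1 := by
    have := hp.two_le
    omega
  have h8 : (2:ℕ) ^ (WLnum c + 3) = 8 * E := by
    rw [pow_add, hE]
    ring
  rw [h8]
  calc E + (P - 1) * (2 * E + 1)
      ≤ (P - 1) * E + (P - 1) * (2 * E + 1) := by
        have : E ≤ (P - 1) * E := Nat.le_mul_of_pos_left E (by omega)
        omega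
    _ = (P - 1) * (3 * E + 1) := by ring
    _ ≤ (P - 1) * (8 * E) := Nat.mul_le_mul_left _ (by omega)

end Grand
section SLSetup

variable {F : Type*} [Field F] {n k : ℕ}

open Matrix

/-- extend an independent family to a basis of `Fⁿ` with prescribed positions -/
theorem myExists_basisExt (hkn : k < n) (x : Fin k → Fin n → F)
    (hx : LinearIndependent F x) :
    ∃ b : Module.Basis (Fin n) F (Fin n → F), ∀ i : Fin k, b (Fin.castLE hkn.le i) = x i := by
  classical
  set W := Submodule.span F (Set.range x) with hW
  obtain ⟨U, hU⟩ := Submodule.exists_isCompl W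
  have hfW : Module.finrank F W = k := by
    rw [hW, finrank_span_eq_card hx, Fintype.card_fin]
  have hfV : Module.finrank F (Fin n → F) = n := Module.finrank_fin_fun F
  have hfU : Module.finrank F U = n - k := by
    have := Submodule.finrank_add_eq_of_isCompl hU
    omega
  let bW : Module.Basis (Fin k) F W := Module.Basis.span hx
  let bU : Module.Basis (Fin (n - k)) F U := (Module.finBasis F U).reindex (finCongr hfU)
  let bprod : Module.Basis (Fin k ⊕ Fin (n - k)) F (W × U) := bW.prod bU
  let e : (W × U) ≃ₗ[F] (Fin n → F) := Submodule.prodEquivOfIsCompl W U hU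
  let eqv : (Fin k ⊕ Fin (n - k)) ≃ Fin n := finSumFinEquiv.trans (finCongr (by omega))
  refine ⟨(bprod.map e).reindex eqv, ?_⟩
  intro i
  have h1 : eqv.symm (Fin.castLE hkn.le i) = Sum.inl i := by
    have h2 : eqv (Sum.inl i) = Fin.castLE hkn.le i := by
      apply Fin.ext
      simp [eqv]
    rw [← h2, Equiv.symm_apply_apply]
  rw [Module.Basis.reindex_apply, h1, Module.Basis.map_apply]
  have h2 : bprod (Sum.inl i) = (bW i, (0 : U)) := by
    apply Prod.ext
    · exact Module.Basis.prod_apply_inl_fst bW bU i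
    · exact Module.Basis.prod_apply_inl_snd bW bU i
  rw [h2]
  have h3 : e ((bW i, (0 : U))) = (bW i : Fin n → F) + ((0 : U) : Fin n → F) :=
    Submodule.coe_prodEquivOfIsCompl' W U hU ((bW i, (0 : U)))
  rw [h3]
  have h4 : ((0 : U) : Fin n → F) = 0 := rfl
  rw [h4, add_zero]
  exact congrArg Subtype.val (Module.Basis.span_apply hx i)

/-- transitivity of `SL_n` on independent `k`-tuples, `k < n` -/
theorem myTransitive [DecidableEq F] (hkn : k < n) (x y : IndepTuples F n k) :
    ∃ g : Matrix.SpecialLinearGroup (Fin n) F,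
      ∀ i : Fin k, (g : Matrix (Fin n) (Fin n) F).mulVec (x.val i) = y.val i := by
  classical
  obtain ⟨bx, hbx⟩ := myExists_basisExt hkn x.val x.prop
  obtain ⟨byy, hby⟩ := myExists_basisExt hkn y.val y.prop
  set Bx : Matrix (Fin n) (Fin n) F := (Pi.basisFun F (Fin n)).toMatrix ⇑bx with hBx
  set By : Matrix (Fin n) (Fin n) F := (Pi.basisFun F (Fin n)).toMatrix ⇑byy with hBy
  haveI : Invertible Bx := (Pi.basisFun F (Fin n)).invertibleToMatrix bx
  haveI : Invertible By := (Pi.basisFun F (Fin n)).invertibleToMatrix byy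
  have hdx : IsUnit Bx.det := Matrix.isUnit_det_of_invertible Bx
  have hdy : IsUnit By.det := Matrix.isUnit_det_of_invertible By
  have hdxne : Bx.det ≠ 0 := hdx.ne_zero
  have hdyne : By.det ≠ 0 := hdy.ne_zero
  have hn0 : 0 < n := by omega
  set j₀ : Fin n := ⟨n - 1, by omega⟩ with hj₀
  set s : F := Bx.det * (By.det)⁻¹ with hs
  set By' : Matrix (Fin n) (Fin n) F := By.updateCol j₀ (s • fun r => By r j₀) with hBy'
  have hdetBy' : By'.det = Bx.det := by
    rw [hBy', Matrix.det_updateCol_smul, Matrix.updateCol_eq_self, hs, mul_assoc,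
      inv_mul_cancel₀ hdyne, mul_one]
  set G : Matrix (Fin n) (Fin n) F := By' * Bx⁻¹ with hG
  have hdetG : G.det = 1 := by
    rw [hG, Matrix.det_mul, hdetBy', Matrix.det_nonsing_inv, Ring.inverse_eq_inv',
      mul_inv_cancel₀ hdxne]
  refine ⟨⟨G, hdetG⟩, ?_⟩
  intro i
  -- columns of Bx are bx
  have hcolx : Bx.mulVec (Pi.single (Fin.castLE hkn.le i) 1) = x.val i := by
    rw [Matrix.mulVec_single_one, ← hbx i]
    funext r
    rw [Matrix.col_apply, hBx, Module.Basis.toMatrix_apply, Pi.basisFun_repr]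
  have hkey : G.mulVec (x.val i) = By'.mulVec (Pi.single (Fin.castLE hkn.le i) 1) := by
    rw [← hcolx, Matrix.mulVec_mulVec, hG, Matrix.mul_assoc, Matrix.nonsing_inv_mul Bx hdx,
      Matrix.mul_one]
  rw [hkey]
  have hne : Fin.castLE hkn.le i ≠ j₀ := by
    intro hcontra
    have h1 : (Fin.castLE hkn.le i : ℕ) = (i : ℕ) := rfl
    have h2 : ((j₀ : Fin n) : ℕ) = n - 1 := rfl
    have : (i : ℕ) < k := i.isLt
    rw [hcontra] at h1
    omega
  rw [Matrix.mulVec_single_one, ← hby i]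
  funext r
  rw [Matrix.col_apply, hBy', Matrix.updateCol_apply, if_neg hne, hBy,
    Module.Basis.toMatrix_apply, Pi.basisFun_repr]

end SLSetup
section SLAct

variable {F : Type*} [Field F] {n k : ℕ}

open Matrix

/-- mapping an independent tuple through an injective linear map -/
theorem myIndep_comp {f : (Fin n → F) →ₗ[F] (Fin n → F)} (hf : Function.Injective f)
    (v : IndepTuples F n k) : LinearIndependent F (fun i => f (v.val i)) := by
  have := v.prop.map' f (LinearMap.ker_eq_bot.mpr hf)
  exact this

/-- the action of `SL_n` on independent tuples -/
noncomputable def myAct (A : Matrix.SpecialLinearGroup (Fin n) F) (v : IndepTuples F n k) :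
    IndepTuples F n k :=
  ⟨fun i => (A : Matrix (Fin n) (Fin n) F).mulVec (v.val i), by
    have hinj : Function.Injective ((A : Matrix (Fin n) (Fin n) F).mulVecLin) := by
      apply Function.LeftInverse.injective
        (g := ((A⁻¹ : Matrix.SpecialLinearGroup (Fin n) F) : Matrix (Fin n) (Fin n) F).mulVecLin)
      intro w
      simp only [Matrix.mulVecLin_apply, Matrix.mulVec_mulVec]
      rw [← Matrix.SpecialLinearGroup.coe_mul, inv_mul_cancel,
        Matrix.SpecialLinearGroup.coe_one, Matrix.one_mulVec]
    have := myIndep_comp hinj v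
    simpa [Matrix.mulVecLin_apply] using this⟩

theorem myAct_val (A : Matrix.SpecialLinearGroup (Fin n) F) (v : IndepTuples F n k) (i : Fin k) :
    (myAct A v).val i = (A : Matrix (Fin n) (Fin n) F).mulVec (v.val i) := rfl

theorem myAct_one (v : IndepTuples F n k) : myAct 1 v = v := by
  apply Subtype.ext
  funext i
  rw [myAct_val, Matrix.SpecialLinearGroup.coe_one, Matrix.one_mulVec]

theorem myAct_mul (A B : Matrix.SpecialLinearGroup (Fin n) F) (v : IndepTuples F n k) :
    myAct (A * B) v = myAct A (myAct B v) := by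
  apply Subtype.ext
  funext i
  rw [myAct_val, myAct_val, myAct_val, Matrix.mulVec_mulVec, Matrix.SpecialLinearGroup.coe_mul]

/-- walks from products of generators -/
theorem myWalk_list {S : Set (Matrix.SpecialLinearGroup (Fin n) F)}
    {R : IndepTuples F n k → IndepTuples F n k → Prop}
    (hRact : ∀ A, A ∈ S → ∀ v, R v (myAct A v)) :
    ∀ l : List (Matrix.SpecialLinearGroup (Fin n) F), (∀ a ∈ l, a ∈ S) →
    ∀ v, dWalk R l.length v (myAct l.prod v) := by
  intro l
  induction l with
  | nil =>
    intro _ v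
    show v = myAct 1 v
    rw [myAct_one]
  | cons a t ih =>
    intro hmem v
    have h1 : dWalk R t.length v (myAct t.prod v) := ih (fun b hb => hmem b (by simp [hb])) v
    have h2 : R (myAct t.prod v) (myAct a (myAct t.prod v)) :=
      hRact a (hmem a (by simp)) (myAct t.prod v)
    have h3 := myDWalk_snoc h1 h2
    rw [← myAct_mul] at h3
    simpa using h3

/-- scaling an independent tuple by a unit -/
noncomputable def myScale (t : Fˣ) (v : IndepTuples F n k) : IndepTuples F n k :=
  ⟨fun i => (t : F) • v.val i, by
    have hinj : Function.Injective ((t : F) • (LinearMap.id : (Fin n → F) →ₗ[F] (Fin n → F))) := by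
      apply Function.LeftInverse.injective
        (g := ((t⁻¹ : Fˣ) : F) • (LinearMap.id : (Fin n → F) →ₗ[F] (Fin n → F)))
      intro w
      simp only [LinearMap.smul_apply, LinearMap.id_apply, smul_smul]
      rw [← Units.val_mul, inv_mul_cancel, Units.val_one, one_smul]
    have := myIndep_comp hinj v
    simpa using this⟩

theorem myScale_val (t : Fˣ) (v : IndepTuples F n k) (i : Fin k) :
    (myScale t v).val i = (t : F) • v.val i := rfl

theorem myScale_scale (t t' : Fˣ) (v : IndepTuples F n k) :
    myScale t (myScale t' v) = myScale (t * t') v := by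
  apply Subtype.ext
  funext i
  rw [myScale_val, myScale_val, myScale_val, smul_smul, ← Units.val_mul]

theorem myScale_one (v : IndepTuples F n k) : myScale 1 v = v := by
  apply Subtype.ext
  funext i
  rw [myScale_val, Units.val_one, one_smul]

/-- scaling as a permutation -/
noncomputable def mySigma (t : Fˣ) : Equiv.Perm (IndepTuples F n k) where
  toFun := myScale t
  invFun := myScale t⁻¹
  left_inv := fun v => by rw [myScale_scale, inv_mul_cancel, myScale_one]
  right_inv := fun v => by rw [myScale_scale, mul_inv_cancel, myScale_one]

theorem mySigma_pow (t : Fˣ) : ∀ (j : ℕ) (v : IndepTuples F n k),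
    ((mySigma t) ^ j) v = myScale (t ^ j) v := by
  intro j
  induction j with
  | zero => intro v; rw [pow_zero, pow_zero, myScale_one]; rfl
  | succ j ih =>
    intro v
    rw [pow_succ', Equiv.Perm.mul_apply, ih v]
    show myScale t (myScale (t ^ j) v) = _
    rw [myScale_scale, ← pow_succ']

end SLAct
/-- Lower bound for the Schreier configuration of `SL_n(F_q)` (`q > 2`) acting on
linearly independent `k`-tuples: if `p` is the smallest prime dividing `q − 1`, then
`WL(𝔛_S) ≥ log₂ (diam Sch(V,S)) − log₂(p − 1) − 3`. -/
theorem WL_lower_bound_SL {F : Type*} [Field F] [Fintype F]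
    (hq : 2 < Fintype.card F) {n k : ℕ} (hk : 0 < k) (hkn : k < n)
    (S : Set (Matrix.SpecialLinearGroup (Fin n) F))
    (hI : (1 : Matrix.SpecialLinearGroup (Fin n) F) ∈ S) (hinv : S⁻¹ = S)
    (hgen : Subgroup.closure S = ⊤)
    (c : IndepTuples F n k → IndepTuples F n k →
      Set (Matrix.SpecialLinearGroup (Fin n) F))
    (hc : ∀ v w : IndepTuples F n k,
      c v w = {A ∈ S | ∀ i : Fin k,
        (A : Matrix (Fin n) (Fin n) F).mulVec (v.val i) = w.val i})
    (R : IndepTuples F n k → IndepTuples F n k → Prop)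
    (hR : ∀ v w : IndepTuples F n k, R v w ↔ ∃ A ∈ S, ∀ i : Fin k,
      (A : Matrix (Fin n) (Fin n) F).mulVec (v.val i) = w.val i)
    (p : ℕ) (hp : p.Prime) (hpq : p ∣ Fintype.card F - 1)
    (hmin : ∀ p' : ℕ, p'.Prime → p' ∣ Fintype.card F - 1 → p ≤ p') :
    Real.logb 2 (ddiam R) - Real.logb 2 ((p : ℝ) - 1) - 3 ≤ (WLnum c : ℝ) := by
  classical
  haveI : Finite (IndepTuples F n k) :=
    inferInstanceAs (Finite {v : Fin k → Fin n → F // LinearIndependent F v})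
  haveI : Fact p.Prime := ⟨hp⟩
  -- membership in colours
  have hmemc : ∀ (v w : IndepTuples F n k) (A : Matrix.SpecialLinearGroup (Fin n) F),
      A ∈ c v w ↔ (A ∈ S ∧ ∀ i : Fin k,
        (A : Matrix (Fin n) (Fin n) F).mulVec (v.val i) = w.val i) := by
    intro v w A
    rw [hc]
    exact Set.mem_sep_iff
  have hRc : ∀ v w, R v w ↔ (c v w).Nonempty := by
    intro v w
    rw [hR]
    constructor
    · rintro ⟨A, hA, hAv⟩; exact ⟨A, (hmemc v w A).mpr ⟨hA, hAv⟩⟩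
    · rintro ⟨A, hA⟩
      obtain ⟨h1, h2⟩ := (hmemc v w A).mp hA
      exact ⟨A, h1, h2⟩
  have hSinv : ∀ A, A ∈ S → A⁻¹ ∈ S := by
    intro A hA
    have : A⁻¹ ∈ S⁻¹ := by rw [Set.mem_inv, inv_inv]; exact hA
    rwa [hinv] at this
  have hsymm : ∀ v w, R v w → R w v := by
    intro v w hvw
    rw [hR] at hvw ⊢
    obtain ⟨A, hA, hAv⟩ := hvw
    refine ⟨A⁻¹, hSinv A hA, fun i => ?_⟩
    rw [← hAv i, Matrix.mulVec_mulVec, ← Matrix.SpecialLinearGroup.coe_mul, inv_mul_cancel,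
      Matrix.SpecialLinearGroup.coe_one, Matrix.one_mulVec]
  have hbase : ∀ x y x' y' : IndepTuples F n k, ¬ R x y → ¬ R x' y' → c x y = c x' y' := by
    have hemp : ∀ x y : IndepTuples F n k, ¬ R x y → c x y = ∅ := by
      intro x y h1
      rw [Set.eq_empty_iff_forall_notMem]
      intro A hA
      obtain ⟨hA1, hA2⟩ := (hmemc _ _ A).mp hA
      exact h1 ((hR x y).mpr ⟨A, hA1, hA2⟩)
    intro x y x' y' h1 h2
    rw [hemp x y h1, hemp x' y' h2]
  have hRact : ∀ A, A ∈ S → ∀ v, R v (myAct A v) := by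
    intro A hA v
    rw [hR]
    exact ⟨A, hA, fun i => rfl⟩
  have hconn : ∀ x y : IndepTuples F n k, ∃ L, dWalk R L x y := by
    intro x y
    obtain ⟨g, hg⟩ := myTransitive hkn x y
    have hgy : myAct g x = y := Subtype.ext (funext fun i => hg i)
    have hgmem : g ∈ Subgroup.closure S := by rw [hgen]; trivial
    have hgm : g ∈ Submonoid.closure (S ∪ S⁻¹) := by
      rw [← Subgroup.closure_toSubmonoid]
      exact hgmem
    rw [hinv, Set.union_self] at hgm
    obtain ⟨l, hl, hlp⟩ := Submonoid.exists_list_of_mem_closure hgm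
    refine ⟨l.length, ?_⟩
    have := myWalk_list hRact l hl x
    rwa [hlp, hgy] at this
  have hGoodR : ∀ x y, R x y → (c x y).Nonempty := fun x y hxy => (hRc x y).mp hxy
  have hfun : ∀ d : Set (Matrix.SpecialLinearGroup (Fin n) F), d.Nonempty →
      ∀ x w w' : IndepTuples F n k, c x w = d → c x w' = d → w = w' := by
    intro d hd x w w' h1 h2
    obtain ⟨A, hA⟩ := hd
    have hA1 := (hmemc x w A).mp (h1 ▸ hA)
    have hA2 := (hmemc x w' A).mp (h2 ▸ hA)
    exact Subtype.ext (funext fun i => by rw [← hA1.2 i, hA2.2 i])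
  -- the unit of order p
  have hpdvd : p ∣ Fintype.card Fˣ := by rw [Fintype.card_units]; exact hpq
  obtain ⟨u, hu⟩ := exists_prime_orderOf_dvd_card p hpdvd
  have hu1 : (u : F) ≠ 1 := by
    intro h
    have h2 : u = 1 := Units.ext (by rw [h, Units.val_one])
    rw [h2, orderOf_one] at hu
    exact hp.one_lt.ne' hu.symm
  have hup : u ^ p = 1 := by rw [← hu]; exact pow_orderOf_eq_one u
  set σ : Equiv.Perm (IndepTuples F n k) := mySigma u with hσdef
  have hσP : σ ^ p = 1 := by
    apply Equiv.ext
    intro v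
    rw [hσdef, mySigma_pow u p v, hup, myScale_one]
    rfl
  have hσc : ∀ x y, c (σ x) (σ y) = c x y := by
    intro x y
    apply Set.ext
    intro A
    rw [hmemc, hmemc]
    constructor
    · rintro ⟨hA, hAv⟩
      refine ⟨hA, fun i => ?_⟩
      have h3 := hAv i
      rw [show (σ x).val i = (u : F) • x.val i from rfl,
        show (σ y).val i = (u : F) • y.val i from rfl, Matrix.mulVec_smul] at h3
      exact smul_right_injective _ (Units.ne_zero u) h3
    · rintro ⟨hA, hAv⟩
      refine ⟨hA, fun i => ?_⟩
      show (A : Matrix (Fin n) (Fin n) F).mulVec ((u : F) • x.val i) = (u : F) • y.val i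
      rw [Matrix.mulVec_smul, hAv i]
  have hRσ : ∀ x y, R x y ↔ R (σ x) (σ y) := by
    intro x y
    rw [hRc, hRc, hσc]
  have hσy : ∀ y : IndepTuples F n k, σ y ≠ y := by
    intro y hy
    have h0 := congrFun (congrArg Subtype.val hy) ⟨0, hk⟩
    have hy0 : y.val ⟨0, hk⟩ ≠ 0 := y.prop.ne_zero ⟨0, hk⟩
    have hzero : ((u : F) - 1) • y.val ⟨0, hk⟩ = 0 := by
      rw [sub_smul, one_smul]
      rw [show (σ y).val ⟨0, hk⟩ = (u : F) • y.val ⟨0, hk⟩ from rfl] at h0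
      rw [h0]
      exact sub_self _
    rcases smul_eq_zero.mp hzero with h | h
    · exact hu1 (sub_eq_zero.mp h)
    · exact hy0 h
  -- the diameter bound
  have hbound : ddiam R ≤ (p - 1) * 2 ^ (WLnum c + 3) :=
    myDiamBound c R σ p hconn hsymm hp hσP hσc hRσ hbase hσy Set.Nonempty hGoodR hfun
  -- real arithmetic
  have hp2 : 2 ≤ p := hp.two_le
  have hpm : (1 : ℝ) ≤ (p : ℝ) - 1 := by
    have : (2 : ℝ) ≤ (p : ℝ) := by exact_mod_cast hp2
    linarith
  have hlogp : 0 ≤ Real.logb 2 ((p : ℝ) - 1) := Real.logb_nonneg (by norm_num) hpm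
  by_cases hD : ddiam R = 0
  · rw [hD]
    have hm0 : (0 : ℝ) ≤ (WLnum c : ℝ) := Nat.cast_nonneg _
    rw [Nat.cast_zero, Real.logb_zero]
    linarith
  · have hD1 : (1 : ℝ) ≤ (ddiam R : ℝ) := by
      have : 1 ≤ ddiam R := Nat.one_le_iff_ne_zero.mpr hD
      exact_mod_cast this
    have hcast : ((ddiam R : ℕ) : ℝ) ≤ ((p : ℝ) - 1) * 2 ^ (WLnum c + 3) := by
      have h3 : ((ddiam R : ℕ) : ℝ) ≤ (((p - 1) * 2 ^ (WLnum c + 3) : ℕ) : ℝ) :=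
        Nat.cast_le.mpr hbound
      rwa [Nat.cast_mul, Nat.cast_pow, Nat.cast_ofNat,
        Nat.cast_sub (by omega : 1 ≤ p), Nat.cast_one] at h3
    have hlog1 : Real.logb 2 (ddiam R) ≤ Real.logb 2 (((p : ℝ) - 1) * 2 ^ (WLnum c + 3)) :=
      Real.logb_le_logb_of_le (by norm_num) (by linarith) hcast
    have hlog2 : Real.logb 2 (((p : ℝ) - 1) * 2 ^ (WLnum c + 3)) =
        Real.logb 2 ((p : ℝ) - 1) + ((WLnum c : ℝ) + 3) := by
      rw [Real.logb_mul (by linarith) (by positivity), Real.logb_pow,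
        Real.logb_self_eq_one (by norm_num)]
      push_cast
      ring
    rw [hlog2] at hlog1
    linarith
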